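/- Let α be a countable ordinal and let X = ω^(α+1) + 1 with the order topology (a countable compact metrizable space), equipped with a metric d compatible with its topology. If f : X → X is a homeomorphism that is expansive with respect to d, then f has a nontrivial homoclinic point: there exist x, p ∈ X with x ≠ p, f(p) = p, and fⁿ(x) → p as n → +∞ and fⁿ(x) → p as n → −∞. -/

import Mathlib

open Filter Set Topology

section GeneralAux

variable {X : Type*} [TopologicalSpace X]

/-- Transfinite iteration of the derived-set operation. -/
noncomputable def cbSet (X : Type*) [TopologicalSpace X] : Ordinal.{0} → Set X :=
  Ordinal.lt_wf.fix (fun β IH => ⋂ γ : Set.Iio β, derivedSet (IH γ.1 γ.2))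

lemma cbSet_def (β : Ordinal.{0}) :
    cbSet X β = ⋂ γ : Set.Iio β, derivedSet (cbSet X γ.1) :=
  WellFounded.fix_eq _ _ _

lemma cbSet_zero : cbSet X 0 = (Set.univ : Set X) := by
  haveI : IsEmpty (Set.Iio (0 : Ordinal.{0})) := ⟨fun x => not_lt_zero (a := x.1) x.2⟩
  rw [cbSet_def]
  exact Set.iInter_of_empty _

lemma homeo_image_derivedSet {Y : Type*} [TopologicalSpace Y] (h : X ≃ₜ Y) (S : Set X) :
    h '' derivedSet S = derivedSet (h '' S) := by
  apply subset_antisymm (h.continuous.image_derivedSet h.injective)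
  intro y hy
  have h1 : h.symm y ∈ h.symm '' derivedSet (h '' S) := ⟨y, hy, rfl⟩
  have h2 : h.symm '' derivedSet (h '' S) ⊆ derivedSet (h.symm '' (h '' S)) :=
    h.symm.continuous.image_derivedSet h.symm.injective
  have h3 : h.symm '' (h '' S) = S := by
    ext z; simp [Set.mem_image]
  refine ⟨h.symm y, ?_, h.apply_symm_apply y⟩
  rw [← h3]
  exact h2 h1

lemma cbSet_image (h : X ≃ₜ X) (β : Ordinal.{0}) : h '' cbSet X β = cbSet X β := by
  induction β using Ordinal.induction with
  | _ β IH =>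
    rw [cbSet_def, Set.image_iInter h.bijective]
    exact Set.iInter_congr fun γ => by
      rw [homeo_image_derivedSet, IH γ.1 γ.2]

lemma closure_subset_union_derivedSet (S : Set X) : closure S ⊆ S ∪ derivedSet S := by
  intro x hx
  by_cases hxS : x ∈ S
  · exact Or.inl hxS
  · refine Or.inr ?_
    rw [mem_derivedSet, accPt_iff_nhds]
    intro U hU
    obtain ⟨y, hyU, hyS⟩ := mem_closure_iff_nhds.1 hx U hU
    exact ⟨y, ⟨hyU, hyS⟩, fun h => hxS (h ▸ hyS)⟩

lemma finite_of_isolated [CompactSpace X] {W : Set X} (hW : IsClosed W)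
    (h : ∀ y ∈ W, ∃ U ∈ 𝓝 y, ∀ z ∈ U ∩ W, z = y) : W.Finite := by
  choose U hU hU1 using h
  obtain ⟨t, ht⟩ := hW.isCompact.elim_nhds_subcover' (fun y hy => U y hy) (fun y hy => hU y hy)
  refine Set.Finite.subset (t.finite_toSet.image fun y => (y.1 : X)) ?_
  intro z hz
  obtain ⟨y, hyt, hzU⟩ := Set.mem_iUnion₂.1 (ht hz)
  have : z = y.1 := hU1 y.1 y.2 z ⟨hzU, hz⟩
  exact ⟨y, hyt, this.symm⟩

end GeneralAux

open Filter Set Topology Ordinal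

section OrdAux

/-- For a nonzero point of an open set of ordinals, some interval `Ioc a x` fits inside. -/
lemma ord_nhd {W : Set Ordinal.{0}} (hW : IsOpen W) {x : Ordinal.{0}} (hx : x ∈ W)
    (hx0 : x ≠ 0) : ∃ a < x, Set.Ioc a x ⊆ W := by
  rcases Ordinal.zero_or_succ_or_isSuccLimit x with h0 | ⟨b, rfl⟩ | hlim
  · exact absurd h0 hx0
  · refine ⟨b, Order.lt_succ b, fun y hy => ?_⟩
    have : y = Order.succ b := le_antisymm hy.2 (Order.succ_le_of_lt hy.1)
    rwa [this]
  · obtain ⟨a, ha, hIoo⟩ := (Ordinal.isOpen_iff.mp hW) x hx hlim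
    exact ⟨a, ha, fun y hy => hy.2.lt_or_eq.elim (fun h => hIoo ⟨hy.1, h⟩) (fun h => h ▸ hx)⟩

/-- Characterization of accumulation points in `Iic o`. -/
lemma accPt_Iic_iff {o : Ordinal.{0}} (S : Set (Set.Iic o)) (x : Set.Iic o) :
    AccPt x (𝓟 S) ↔ x.1 ≠ 0 ∧ ∀ a < x.1, ∃ y ∈ S, a < y.1 ∧ y.1 < x.1 := by
  rw [accPt_iff_nhds]
  constructor
  · intro H
    constructor
    · intro hx0
      obtain ⟨y, ⟨hyU, _⟩, hyx⟩ := H (Subtype.val ⁻¹' Set.Iio 1)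
        (IsOpen.mem_nhds (isOpen_Iio.preimage continuous_subtype_val)
          (by simp only [Set.mem_preimage, Set.mem_Iio, hx0]; exact zero_lt_one))
      apply hyx
      apply Subtype.ext
      have : y.1 < 1 := hyU
      rw [Ordinal.lt_one_iff_zero] at this
      rw [this, hx0]
    · intro a ha
      have hopen : IsOpen (Set.Ioc a x.1) := by
        have : Set.Ioc a x.1 = Set.Ioo a (Order.succ x.1) := by
          ext z
          simp [Set.mem_Ioc, Set.mem_Ioo, Order.lt_succ_iff]
        rw [this]
        exact isOpen_Ioo
      obtain ⟨y, ⟨hyU, hyS⟩, hyx⟩ := H (Subtype.val ⁻¹' Set.Ioc a x.1)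
        (IsOpen.mem_nhds (hopen.preimage continuous_subtype_val) ⟨ha, le_refl _⟩)
      exact ⟨y, hyS, hyU.1, lt_of_le_of_ne hyU.2 fun h => hyx (Subtype.ext h)⟩
  · rintro ⟨hx0, H⟩ U hU
    obtain ⟨T, hTU, hT, hxT⟩ := mem_nhds_iff.mp hU
    obtain ⟨W, hW, rfl⟩ := isOpen_induced_iff.mp hT
    obtain ⟨a, ha, hIoc⟩ := ord_nhd hW hxT hx0
    obtain ⟨y, hyS, hay, hyx⟩ := H a ha
    exact ⟨y, ⟨hTU (hIoc ⟨hay, hyx.le⟩), hyS⟩, fun h => absurd (congrArg Subtype.val h) hyx.ne⟩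

lemma derivedSet_eq_of_diff {o : Ordinal.{0}} {S T : Set (Set.Iic o)}
    (h : ∀ y : Set.Iic o, y.1 ≠ 0 → (y ∈ S ↔ y ∈ T)) : derivedSet S = derivedSet T := by
  ext x
  rw [mem_derivedSet, mem_derivedSet, accPt_Iic_iff, accPt_Iic_iff]
  have key : ∀ (A B : Set (Set.Iic o)), (∀ y : Set.Iic o, y.1 ≠ 0 → (y ∈ A → y ∈ B)) →
      (x.1 ≠ 0 ∧ ∀ a < x.1, ∃ y ∈ A, a < y.1 ∧ y.1 < x.1) →
      (x.1 ≠ 0 ∧ ∀ a < x.1, ∃ y ∈ B, a < y.1 ∧ y.1 < x.1) := by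
    rintro A B hAB ⟨hx0, H⟩
    refine ⟨hx0, fun a ha => ?_⟩
    obtain ⟨y, hyA, hay, hyx⟩ := H a ha
    have hy0 : y.1 ≠ 0 := (pos_iff_ne_zero).1 (lt_of_le_of_lt (zero_le (a := a)) hay)
    exact ⟨y, hAB y hy0 hyA, hay, hyx⟩
  exact ⟨key S T (fun y hy => (h y hy).1), key T S (fun y hy => (h y hy).2)⟩

/-- The derived set of the multiples of `ω^γ` in `Iic o` is the set of
nonzero multiples of `ω^(γ+1)`. -/
lemma derivedSet_mult {o γ : Ordinal.{0}} :
    derivedSet {x : Set.Iic o | (Ordinal.omega0) ^ γ ∣ x.1}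
      = {x : Set.Iic o | x.1 ≠ 0 ∧ (Ordinal.omega0) ^ (γ + 1) ∣ x.1} := by
  have hbne : (Ordinal.omega0) ^ γ ≠ 0 := Ordinal.opow_ne_zero _ Ordinal.omega0_ne_zero
  have hbpos : (0 : Ordinal) < Ordinal.omega0 ^ γ := pos_iff_ne_zero.2 hbne
  ext x
  rw [mem_derivedSet, accPt_Iic_iff]
  constructor
  · rintro ⟨hx0, H⟩
    refine ⟨hx0, ?_⟩
    set b := (Ordinal.omega0) ^ γ with hb
    have hgap : ∀ y : Ordinal, b ∣ y → b * (x.1 / b) < y → x.1 < y := by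
      rintro y ⟨u, rfl⟩ hy
      have hsu : x.1 / b < u := (mul_lt_mul_iff_right₀ hbpos).1 hy
      have h1 : b * (x.1 / b) + b ≤ b * u := by
        rw [← Ordinal.mul_succ]
        exact mul_le_mul_right (Order.succ_le_of_lt hsu) b
      calc x.1 < b * (x.1 / b) + b := by
            conv_lhs => rw [← Ordinal.div_add_mod x.1 b]
            exact add_lt_add_right (Ordinal.mod_lt _ hbne) _
        _ ≤ b * u := h1
    have ht : b ∣ x.1 := by
      by_contra hnd
      have hmodpos : 0 < x.1 % b := pos_iff_ne_zero.2 fun h =>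
        hnd (Ordinal.dvd_iff_mod_eq_zero.2 h)
      have ha : b * (x.1 / b) < x.1 := by
        conv_rhs => rw [← Ordinal.div_add_mod x.1 b]
        have := add_lt_add_right hmodpos (b * (x.1 / b))
        simpa using this
      obtain ⟨y, hyS, hay, hyx⟩ := H _ ha
      exact absurd (hgap y.1 hyS hay) (not_lt.2 hyx.le)
    obtain ⟨s, hs⟩ := ht
    have hsm : s % Ordinal.omega0 < Ordinal.omega0 := Ordinal.mod_lt _ Ordinal.omega0_ne_zero
    obtain ⟨n, hn⟩ := Ordinal.lt_omega0.1 hsm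
    cases n with
    | zero =>
      have hws : (Ordinal.omega0) ∣ s := Ordinal.dvd_iff_mod_eq_zero.2 (by simpa using hn)
      obtain ⟨v, hv⟩ := hws
      have hbw : (Ordinal.omega0) ^ (γ + 1) = b * Ordinal.omega0 := by
        rw [Ordinal.add_one_eq_succ, Ordinal.opow_succ]
      exact ⟨v, by rw [hs, hv, hbw, mul_assoc]⟩
    | succ mV =>
      exfalso
      have hcast : ((mV + 1 : ℕ) : Ordinal) = (mV : Ordinal) + 1 := Nat.cast_add_one mV
      obtain ⟨k, hk⟩ : ∃ k, s / Ordinal.omega0 = k := ⟨_, rfl⟩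
      have hsplit : s = Ordinal.omega0 * k + ((mV : Ordinal) + 1) := by
        conv_lhs => rw [← Ordinal.div_add_mod s Ordinal.omega0, hn]
        rw [hk, hcast]
      have hxw : x.1 = b * (Ordinal.omega0 * k + ((mV : Ordinal) + 1)) := by
        rw [hs, hsplit]
      have hlt : b * (Ordinal.omega0 * k + (mV : Ordinal)) < x.1 := by
        rw [hxw]
        exact (mul_lt_mul_iff_right₀ hbpos).2
          (add_lt_add_right (lt_add_one _) _)
      obtain ⟨y, hyS, hay, hyx⟩ := H _ hlt
      obtain ⟨u, hu⟩ := hyS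
      rw [hu] at hay hyx
      have h1 : Ordinal.omega0 * k + (mV : Ordinal) < u :=
        (mul_lt_mul_iff_right₀ hbpos).1 hay
      have h2 : u < Ordinal.omega0 * k + ((mV : Ordinal) + 1) := by
        rw [hxw] at hyx
        exact (mul_lt_mul_iff_right₀ hbpos).1 hyx
      have h3 : Ordinal.omega0 * k + ((mV : Ordinal) + 1) ≤ u := by
        rw [← add_assoc, Ordinal.add_one_eq_succ]
        exact Order.succ_le_of_lt h1
      exact absurd h2 (not_lt.2 h3)
  · rintro ⟨hx0, d, hd⟩
    refine ⟨hx0, fun a ha => ?_⟩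
    have hdne : d ≠ 0 := by rintro rfl; rw [mul_zero] at hd; exact hx0 hd
    have he : Order.IsSuccLimit (Ordinal.omega0 * d) :=
      Ordinal.isSuccLimit_mul_left Ordinal.isSuccLimit_omega0 (pos_iff_ne_zero.2 hdne)
    have hbw : (Ordinal.omega0) ^ (γ + 1) = Ordinal.omega0 ^ γ * Ordinal.omega0 := by
      rw [Ordinal.add_one_eq_succ, Ordinal.opow_succ]
    have hxe : x.1 = Ordinal.omega0 ^ γ * (Ordinal.omega0 * d) := by
      rw [hd, hbw, mul_assoc]
    set b := (Ordinal.omega0) ^ γ with hb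
    have hq : a / b < Ordinal.omega0 * d := (Ordinal.div_lt hbne).2 (by rw [← hxe]; exact ha)
    have hq1 : Order.succ (a / b) < Ordinal.omega0 * d := he.succ_lt hq
    have hylt : b * Order.succ (a / b) < x.1 := by
      rw [hxe]
      exact (mul_lt_mul_iff_right₀ hbpos).2 hq1
    refine ⟨⟨b * Order.succ (a / b), le_trans hylt.le x.2⟩, ⟨Order.succ (a / b), rfl⟩, ?_, hylt⟩
    exact Ordinal.lt_mul_succ_div a hbne

/-- If `x` is divisible by all `ω^γ`, `γ < λ`, `λ` limit, then divisible by `ω^λ`. -/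
lemma opow_limit_dvd {x lam : Ordinal.{0}} (hl : Order.IsSuccLimit lam)
    (h : ∀ γ < lam, (Ordinal.omega0) ^ γ ∣ x) : (Ordinal.omega0) ^ lam ∣ x := by
  have hne : (Ordinal.omega0) ^ lam ≠ 0 := Ordinal.opow_ne_zero _ Ordinal.omega0_ne_zero
  rw [Ordinal.dvd_iff_mod_eq_zero]
  by_contra hr
  have hrlt : x % Ordinal.omega0 ^ lam < Ordinal.omega0 ^ lam := Ordinal.mod_lt _ hne
  obtain ⟨γ, hγ, hrγ⟩ := (Ordinal.lt_opow_of_isSuccLimit Ordinal.omega0_ne_zero hl).1 hrlt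
  have h1 : Ordinal.omega0 ^ γ ∣ Ordinal.omega0 ^ lam * (x / Ordinal.omega0 ^ lam) :=
    Dvd.dvd.mul_right (Ordinal.opow_dvd_opow _ hγ.le) _
  have h2 : Ordinal.omega0 ^ γ ∣ x := h γ hγ
  have hxeq : Ordinal.omega0 ^ lam * (x / Ordinal.omega0 ^ lam) + x % Ordinal.omega0 ^ lam = x :=
    Ordinal.div_add_mod x _
  have h3 : Ordinal.omega0 ^ γ ∣ x % Ordinal.omega0 ^ lam := by
    obtain ⟨b', hb'⟩ := h1
    obtain ⟨x', hx'⟩ := h2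
    have hbposγ : (0:Ordinal) < Ordinal.omega0 ^ γ :=
      Ordinal.opow_pos _ Ordinal.omega0_pos
    have hble : Ordinal.omega0 ^ γ * b' ≤ Ordinal.omega0 ^ γ * x' := by
      calc Ordinal.omega0 ^ γ * b' = Ordinal.omega0 ^ lam * (x / Ordinal.omega0 ^ lam) :=
            hb'.symm
        _ ≤ x := Ordinal.mul_div_le x _
        _ = Ordinal.omega0 ^ γ * x' := hx'
    have hb'x' : b' ≤ x' := le_of_mul_le_mul_left hble hbposγ
    refine ⟨x' - b', ?_⟩
    have hsum : Ordinal.omega0 ^ γ * b' + Ordinal.omega0 ^ γ * (x' - b') = Ordinal.omega0 ^ γ * x' := by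
      rw [← mul_add, Ordinal.add_sub_cancel_of_le hb'x']
    have hthis : Ordinal.omega0 ^ γ * b' + x % Ordinal.omega0 ^ lam
        = Ordinal.omega0 ^ γ * b' + Ordinal.omega0 ^ γ * (x' - b') := by
      calc Ordinal.omega0 ^ γ * b' + x % Ordinal.omega0 ^ lam
          = Ordinal.omega0 ^ lam * (x / Ordinal.omega0 ^ lam) + x % Ordinal.omega0 ^ lam := by
            rw [hb']
        _ = x := hxeq
        _ = Ordinal.omega0 ^ γ * x' := hx'
        _ = Ordinal.omega0 ^ γ * b' + Ordinal.omega0 ^ γ * (x' - b') := hsum.symm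
    exact (add_right_inj _).1 hthis
  have hle : Ordinal.omega0 ^ γ ≤ x % Ordinal.omega0 ^ lam :=
    Ordinal.le_of_dvd hr h3
  exact absurd hrγ (not_lt.2 hle)

end OrdAux
section CbEq

open Filter Set Topology

/-- The `β`-th Cantor–Bendixson level of `Iic o` consists of the nonzero
multiples of `ω^β` (for `β ≠ 0`). -/
lemma cbSet_eq {o : Ordinal.{0}} {β : Ordinal.{0}} (hβ : β ≠ 0) :
    cbSet (Set.Iic o) β = {x : Set.Iic o | x.1 ≠ 0 ∧ (Ordinal.omega0) ^ β ∣ x.1} := by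
  induction β using Ordinal.induction with
  | _ β IH =>
  rw [cbSet_def]
  have hstep : ∀ γ : Set.Iio β, derivedSet (cbSet (Set.Iic o) γ.1)
      = {x : Set.Iic o | x.1 ≠ 0 ∧ (Ordinal.omega0) ^ (γ.1 + 1) ∣ x.1} := by
    intro γ
    rcases eq_or_ne γ.1 0 with h0 | h0
    · rw [h0, cbSet_zero,
        derivedSet_eq_of_diff (T := {x : Set.Iic o | (Ordinal.omega0) ^ (0:Ordinal) ∣ x.1})
          (fun y _ => by simp [Ordinal.opow_zero]),
        derivedSet_mult]
    · rw [IH γ.1 γ.2 h0,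
        derivedSet_eq_of_diff (T := {x : Set.Iic o | (Ordinal.omega0) ^ γ.1 ∣ x.1})
          (fun y hy => by simp [hy]),
        derivedSet_mult]
  rw [Set.iInter_congr hstep]
  ext x
  simp only [Set.mem_iInter, Set.mem_setOf_eq]
  constructor
  · intro H
    have h0β : (0 : Ordinal) < β := pos_iff_ne_zero.2 hβ
    have hx0 : x.1 ≠ 0 := (H ⟨0, h0β⟩).1
    refine ⟨hx0, ?_⟩
    rcases Ordinal.zero_or_succ_or_isSuccLimit β with rfl | ⟨δ, rfl⟩ | hlim
    · exact absurd rfl hβ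
    · have := (H ⟨δ, Order.lt_succ δ⟩).2
      rwa [Ordinal.add_one_eq_succ] at this
    · refine opow_limit_dvd hlim fun γ hγ => ?_
      exact dvd_trans (Ordinal.opow_dvd_opow _ (le_of_lt (lt_add_one γ))) ((H ⟨γ, hγ⟩).2)
  · rintro ⟨hx0, hd⟩ γ
    refine ⟨hx0, dvd_trans (Ordinal.opow_dvd_opow _ ?_) hd⟩
    rw [Ordinal.add_one_eq_succ]
    exact Order.succ_le_of_lt γ.2

end CbEq

section PermAux

lemma perm_zpow_fix {Y : Type*} (h : Equiv.Perm Y) {q : Y} (hq : h q = q) :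
    ∀ n : ℤ, (h ^ n) q = q := by
  have hinv : h⁻¹ q = q := by
    conv_lhs => rw [← hq]
    rw [Equiv.Perm.inv_def, Equiv.symm_apply_apply]
  intro n
  induction n using Int.induction_on with
  | zero => rfl
  | succ n ih =>
    rw [zpow_add_one, Equiv.Perm.mul_apply, hq, ih]
  | pred n ih =>
    rw [zpow_sub_one, Equiv.Perm.mul_apply, hinv, ih]

lemma perm_zpow_mem {Y : Type*} (h : Equiv.Perm Y) {C : Set Y}
    (hC : ∀ y, y ∈ C ↔ h y ∈ C) : ∀ (n : ℤ) (y), y ∈ C → (h ^ n) y ∈ C := by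
  intro n
  induction n using Int.induction_on with
  | zero => intro y hy; simpa using hy
  | succ n ih =>
    intro y hy
    rw [zpow_add_one, Equiv.Perm.mul_apply]
    exact ih _ ((hC y).1 hy)
  | pred n ih =>
    intro y hy
    rw [zpow_sub_one, Equiv.Perm.mul_apply]
    refine ih _ ?_
    have := (hC (h⁻¹ y)).2
    simp only [Equiv.Perm.inv_def, Equiv.apply_symm_apply] at this
    exact this hy

lemma range_zpow_finite {Y : Type*} (h : Equiv.Perm Y) {q : Y} {k : ℕ} (hk : 0 < k)
    (hq : (h ^ (k : ℤ)) q = q) : (Set.range fun j : ℤ => (h ^ j) q).Finite := by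
  have hfix : ∀ m : ℤ, (h ^ ((k : ℤ) * m)) q = q := by
    intro m
    rw [zpow_mul]
    exact perm_zpow_fix (h ^ (k : ℤ)) hq m
  apply Set.Finite.subset ((Set.finite_Icc (0 : ℤ) k).image fun j => (h ^ j) q)
  rintro _ ⟨j, rfl⟩
  have hkz : (0 : ℤ) < (k : ℤ) := by exact_mod_cast hk
  refine ⟨j % k, ⟨Int.emod_nonneg j hkz.ne', (Int.emod_lt_of_pos j hkz).le⟩, ?_⟩
  conv_rhs => rw [← Int.emod_add_mul_ediv j (k : ℤ)]
  show (h ^ (j % (k : ℤ))) q = (h ^ (j % (k : ℤ) + (k : ℤ) * (j / (k : ℤ)))) q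
  rw [zpow_add, Equiv.Perm.mul_apply, hfix]

end PermAux
open Filter

lemma dist_set_closed {Y : Type*} (m : MetricSpace Y) (p : Y) (c : ℝ) :
    @IsClosed Y m.toUniformSpace.toTopologicalSpace {y | c ≤ @dist _ m.toDist y p} := by
  letI := m
  exact isClosed_le continuous_const (continuous_id.dist continuous_const)

theorem expansive_homoclinic_aux (α : Ordinal.{0}) (o : Ordinal.{0})
    (ho : o = Ordinal.omega0 ^ (α + 1))
    (m : MetricSpace (Set.Iic o))
    (hm : m.toUniformSpace.toTopologicalSpace =
      (inferInstance : TopologicalSpace (Set.Iic o)))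
    (f : (Set.Iic o) ≃ₜ (Set.Iic o))
    (c : ℝ) (hc : 0 < c)
    (hexp : ∀ x y : Set.Iic o, x ≠ y →
      ∃ n : ℤ, c < @dist _ m.toDist ((f.toEquiv ^ n) x) ((f.toEquiv ^ n) y)) :
    ∃ x p : Set.Iic o, x ≠ p ∧ f p = p ∧
      Tendsto (fun n : ℤ => (f.toEquiv ^ n) x) atTop (nhds p) ∧
      Tendsto (fun n : ℤ => (f.toEquiv ^ n) x) atBot (nhds p) := by
  classical
  have hone : o ≠ 0 := by
    rw [ho]; exact Ordinal.opow_ne_zero _ Ordinal.omega0_ne_zero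
  haveI : CompactSpace (Set.Iic o) := by
    rw [← isCompact_iff_compactSpace, ← Set.Icc_bot]
    exact isCompact_Icc
  set p : Set.Iic o := ⟨o, le_refl o⟩ with hpdef
  set C : Set (Set.Iic o) := cbSet (Set.Iic o) α with hCdef
  have hC_inv : f '' C = C := cbSet_image f α
  have hNsub : {x : Set.Iic o | x.1 ≠ 0 ∧ (Ordinal.omega0) ^ α ∣ x.1} ⊆ C := by
    rcases eq_or_ne α 0 with rfl | hα0
    · rw [hCdef, cbSet_zero]; exact Set.subset_univ _
    · rw [hCdef, cbSet_eq hα0]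
  have hdC : derivedSet C = {p} := by
    have h1 : derivedSet C = {x : Set.Iic o | x.1 ≠ 0 ∧ (Ordinal.omega0) ^ (α + 1) ∣ x.1} := by
      rcases eq_or_ne α 0 with rfl | hα0
      · rw [hCdef, cbSet_zero,
          derivedSet_eq_of_diff (T := {x : Set.Iic o | (Ordinal.omega0) ^ (0:Ordinal) ∣ x.1})
            (fun y _ => by simp [Ordinal.opow_zero]),
          derivedSet_mult]
      · rw [hCdef, cbSet_eq hα0,
          derivedSet_eq_of_diff (T := {x : Set.Iic o | (Ordinal.omega0) ^ α ∣ x.1})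
            (fun y hy => by simp [hy]),
          derivedSet_mult]
    rw [h1]
    ext x
    simp only [Set.mem_setOf_eq, Set.mem_singleton_iff]
    constructor
    · rintro ⟨hx0, hdvd⟩
      refine Subtype.ext (le_antisymm x.2 ?_)
      show o ≤ x.1
      exact ho.trans_le (Ordinal.le_of_dvd hx0 hdvd)
    · rintro rfl
      refine ⟨hone, ?_⟩
      show Ordinal.omega0 ^ (α + 1) ∣ o
      exact ⟨1, by rw [mul_one]; exact ho⟩
  have hfp : f p = p := by
    have himg : f '' derivedSet C = derivedSet C := by
      rw [homeo_image_derivedSet f C, hC_inv]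
    rw [hdC, Set.image_singleton] at himg
    exact Set.singleton_eq_singleton_iff.1 himg
  have hgp : ∀ n : ℤ, (f.toEquiv ^ n) p = p := perm_zpow_fix f.toEquiv hfp
  have hmemC : ∀ (n : ℤ) (x), x ∈ C → (f.toEquiv ^ n) x ∈ C := by
    refine perm_zpow_mem f.toEquiv fun y => ⟨fun hy => ?_, fun hy => ?_⟩
    · rw [← hC_inv]; exact ⟨y, hy, rfl⟩
    · rw [← hC_inv] at hy
      obtain ⟨z, hz, hze⟩ := hy
      rwa [f.injective hze] at hz
  have hclC : closure C ⊆ C ∪ {p} := by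
    intro x hx
    rcases closure_subset_union_derivedSet C hx with h | h
    · exact Or.inl h
    · exact Or.inr (hdC ▸ h)
  have hFIN : ∀ W : Set (Set.Iic o), IsClosed W → W ⊆ closure C → p ∉ W → W.Finite := by
    intro W hWc hWsub hpW
    apply finite_of_isolated hWc
    intro y hyW
    have hyp : y ≠ p := fun h => hpW (h ▸ hyW)
    have hnd : y ∉ derivedSet C := by rw [hdC]; exact hyp
    rw [derivedSet, Set.mem_setOf_eq, accPt_iff_nhds] at hnd
    push_neg at hnd
    obtain ⟨U, hU, hU2⟩ := hnd
    refine ⟨U, hU, fun z hz => ?_⟩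
    have hzC : z ∈ C := by
      have hzp : z ≠ p := fun h => hpW (h ▸ hz.2)
      rcases hclC (hWsub hz.2) with h | h
      · exact h
      · exact absurd h hzp
    exact hU2 z ⟨hz.1, hzC⟩
  have hInf : (C \ {p}).Infinite := by
    have hmono : StrictMono fun n : ℕ => (Ordinal.omega0) ^ α * ((n : Ordinal) + 1) := by
      intro a b hab
      refine (mul_lt_mul_iff_right₀ (Ordinal.opow_pos _ Ordinal.omega0_pos)).2 ?_
      exact_mod_cast Nat.add_lt_add_right hab 1
    have hle : ∀ n : ℕ, (Ordinal.omega0) ^ α * ((n : Ordinal) + 1) < o := by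
      intro n
      have h1 : ((n : Ordinal) + 1) < Ordinal.omega0 := by
        exact_mod_cast Ordinal.nat_lt_omega0 (n + 1)
      have h2 : (Ordinal.omega0) ^ α * ((n : Ordinal) + 1)
          < (Ordinal.omega0) ^ α * Ordinal.omega0 :=
        (mul_lt_mul_iff_right₀ (Ordinal.opow_pos _ Ordinal.omega0_pos)).2 h1
      have h3 : (Ordinal.omega0) ^ α * Ordinal.omega0 = o := by
        rw [ho, Ordinal.add_one_eq_succ, Ordinal.opow_succ]
      rwa [h3] at h2
    apply Set.infinite_of_injective_forall_mem
      (f := fun n : ℕ => (⟨(Ordinal.omega0) ^ α * ((n : Ordinal) + 1), (hle n).le⟩ : Set.Iic o))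
    · intro a b hab
      exact hmono.injective (congrArg Subtype.val hab)
    · intro n
      refine ⟨?_, ?_⟩
      · apply hNsub
        refine ⟨?_, ⟨(n : Ordinal) + 1, rfl⟩⟩
        exact (mul_pos (Ordinal.opow_pos _ Ordinal.omega0_pos)
          (by exact_mod_cast Nat.succ_pos n)).ne'
      · intro hmem
        have h5 := congrArg Subtype.val hmem
        simp only at h5
        exact absurd h5 (hle n).ne
  by_cases hcase : ∃ q ∈ C \ {p}, Function.Injective fun n : ℤ => (f.toEquiv ^ n) q
  · obtain ⟨q, hqC, hinj⟩ := hcase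
    have hqp : q ≠ p := fun h => hqC.2 (by rw [h]; rfl)
    have key : ∀ U ∈ nhds p, ({n : ℤ | (f.toEquiv ^ n) q ∈ U}ᶜ).Finite := by
      intro U hU
      obtain ⟨V, hVU, hVo, hpV⟩ := mem_nhds_iff.1 hU
      have hWfin : (closure C ∩ Vᶜ).Finite :=
        hFIN _ (isClosed_closure.inter hVo.isClosed_compl) Set.inter_subset_left
          (fun h => h.2 hpV)
      have hpre : ((fun n : ℤ => (f.toEquiv ^ n) q) ⁻¹' (closure C ∩ Vᶜ)).Finite :=
        Set.Finite.preimage (hinj.injOn) hWfin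
      refine hpre.subset fun n hn => ?_
      exact ⟨subset_closure (hmemC n q hqC.1), fun hV => hn (hVU hV)⟩
    refine ⟨q, p, hqp, hfp, ?_, ?_⟩
    · rw [Filter.tendsto_def]
      intro U hU
      rcases (key U hU).bddAbove with ⟨b, hb⟩
      refine Filter.mem_of_superset (Filter.Ioi_mem_atTop b) fun n hn => ?_
      by_contra h
      exact absurd (hb h) (not_le.2 hn)
    · rw [Filter.tendsto_def]
      intro U hU
      rcases (key U hU).bddBelow with ⟨b, hb⟩
      refine Filter.mem_of_superset (Filter.Iio_mem_atBot b) fun n hn => ?_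
      by_contra h
      exact absurd (hb h) (not_le.2 hn)
  · push_neg at hcase
    exfalso
    have hper : ∀ q ∈ C \ {p}, ∃ k : ℕ, 0 < k ∧ (f.toEquiv ^ (k : ℤ)) q = q := by
      intro q hq
      obtain ⟨a, b, hab, hne⟩ := Function.not_injective_iff.1 (hcase q hq)
      have hfix : (f.toEquiv ^ (a - b)) q = q := by
        apply (f.toEquiv ^ b).injective
        have h1 : (f.toEquiv ^ b) ((f.toEquiv ^ (a - b)) q) = (f.toEquiv ^ (b + (a - b))) q := by
          rw [zpow_add, Equiv.Perm.mul_apply]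
        have h2 : b + (a - b) = a := by ring
        rw [h1, h2, hab]
      have habs : (f.toEquiv ^ (((a - b).natAbs : ℕ) : ℤ)) q = q := by
        rcases Int.natAbs_eq (a - b) with h | h
        · rw [← h]; exact hfix
        · have h2 : (f.toEquiv ^ (-(((a - b).natAbs : ℕ) : ℤ))) q = q := by
            rw [← h]; exact hfix
          have h3 := congrArg (f.toEquiv ^ (((a - b).natAbs : ℕ) : ℤ)) h2
          rw [← Equiv.Perm.mul_apply, ← zpow_add, add_neg_cancel, zpow_zero,
            Equiv.Perm.one_apply] at h3
          exact h3.symm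
      exact ⟨(a - b).natAbs, Int.natAbs_pos.2 (sub_ne_zero.2 hne), habs⟩
    have hclosed : IsClosed {y : Set.Iic o | c ≤ @dist _ m.toDist y p} := by
      exact Eq.mp
        (congrArg (fun t : TopologicalSpace (Set.Iic o) =>
          @IsClosed _ t {y : Set.Iic o | c ≤ @dist _ m.toDist y p}) hm)
        (dist_set_closed m p c)
    have hKfin : (closure C ∩ {y : Set.Iic o | c ≤ @dist _ m.toDist y p}).Finite := by
      apply hFIN
      · exact isClosed_closure.inter hclosed
      · exact Set.inter_subset_left
      · rintro ⟨-, h2⟩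
        rw [Set.mem_setOf_eq, dist_self] at h2
        exact absurd h2 (not_le.2 hc)
    have hcover : C \ {p} ⊆ ⋃ r ∈ closure C ∩ {y : Set.Iic o | c ≤ @dist _ m.toDist y p},
        Set.range fun j : ℤ => (f.toEquiv ^ j) r := by
      intro q hq
      have hqp : q ≠ p := fun h => hq.2 (by rw [h]; rfl)
      obtain ⟨n, hn⟩ := hexp q p hqp
      rw [hgp n] at hn
      have hrK : (f.toEquiv ^ n) q ∈ closure C ∩ {y : Set.Iic o | c ≤ @dist _ m.toDist y p} :=
        ⟨subset_closure (hmemC n q hq.1), hn.le⟩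
      refine Set.mem_biUnion hrK ⟨-n, ?_⟩
      show (f.toEquiv ^ (-n)) ((f.toEquiv ^ n) q) = q
      rw [← Equiv.Perm.mul_apply, ← zpow_add, neg_add_cancel, zpow_zero,
        Equiv.Perm.one_apply]
    have hfin2 : (C \ {p}).Finite := by
      refine Set.Finite.subset (Set.Finite.biUnion hKfin fun r hr => ?_) hcover
      have hrC : r ∈ C \ {p} := by
        have hrp : r ≠ p := by
          rintro rfl
          have h4 := hr.2
          rw [Set.mem_setOf_eq, dist_self] at h4
          exact absurd h4 (not_le.2 hc)
        rcases hclC hr.1 with h | h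
        · exact ⟨h, hrp⟩
        · exact absurd h hrp
      obtain ⟨k, hk, hfix⟩ := hper r hrC
      exact range_zpow_finite f.toEquiv hk hfix
    exact hInf hfin2

/-- Let `α` be a countable ordinal and let `X = ω^(α+1) + 1` (realized as the set of
ordinals `≤ ω^(α+1)` with the order topology), equipped with a compatible metric
`d`. If `f : X → X` is a homeomorphism that is expansive with respect to `d`, then
`f` has a nontrivial homoclinic point: there are `x ≠ p` with `f(p) = p` and
`fⁿ(x) → p` as `n → +∞` and as `n → −∞`. -/
theorem expansive_countable_ordinal_homoclinic (α : Ordinal.{0})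
    (hα : α.card ≤ Cardinal.aleph0)
    (m : MetricSpace (Set.Iic (Ordinal.omega0 ^ (α + 1))))
    (hm : m.toUniformSpace.toTopologicalSpace =
      (inferInstance : TopologicalSpace (Set.Iic (Ordinal.omega0 ^ (α + 1)))))
    (f : (Set.Iic (Ordinal.omega0 ^ (α + 1))) ≃ₜ (Set.Iic (Ordinal.omega0 ^ (α + 1))))
    (c : ℝ) (hc : 0 < c)
    (hexp : ∀ x y : Set.Iic (Ordinal.omega0 ^ (α + 1)), x ≠ y →
      ∃ n : ℤ, c < @dist _ m.toDist ((f.toEquiv ^ n) x) ((f.toEquiv ^ n) y)) :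
    ∃ x p : Set.Iic (Ordinal.omega0 ^ (α + 1)), x ≠ p ∧ f p = p ∧
      Tendsto (fun n : ℤ => (f.toEquiv ^ n) x) atTop (nhds p) ∧
      Tendsto (fun n : ℤ => (f.toEquiv ^ n) x) atBot (nhds p) :=
  expansive_homoclinic_aux α _ rfl m hm f c hc hexp
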